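/- arXiv:1403.6590 — 2 statements merged into one kernel-verified Lean document; each statement's English description precedes it below -/
import Mathlib

section
/- For positive semidefinite matrices M and N of the same finite size, the squared Frobenius (Hilbert–Schmidt) norm of √M − √N is at most the trace norm of M − N, i.e. ‖√M − √N‖₂² ≤ ‖M − N‖₁. -/
open Matrix
open ComplexOrder
open scoped Classical

/-- positive semidefinite square root (junk value `0` off the PSD matrices) -/
noncomputable def msqrt {n : Type*} [Fintype n] [DecidableEq n] (A : Matrix n n ℂ) :
    Matrix n n ℂ :=
  if h : A.PosSemidef then
    h.1.eigenvectorUnitary.1 * diagonal ((↑) ∘ (√·) ∘ h.1.eigenvalues) *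
      (star h.1.eigenvectorUnitary : Matrix n n ℂ)
  else 0

/-- matrix logarithm via the Hermitian functional calculus (junk value `0` otherwise) -/
noncomputable def mlog {n : Type*} [Fintype n] [DecidableEq n] (A : Matrix n n ℂ) :
    Matrix n n ℂ :=
  if h : A.IsHermitian then h.cfc Real.log else 0

/-- matrix logarithm taken on the support (eigenvalue `0` is sent to `0`) -/
noncomputable def mlog0 {n : Type*} [Fintype n] [DecidableEq n] (A : Matrix n n ℂ) :
    Matrix n n ℂ :=
  if h : A.IsHermitian then h.cfc (fun x => if x = 0 then 0 else Real.log x) else 0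

/-- matrix exponential -/
noncomputable def mexp {n : Type*} [Fintype n] [DecidableEq n] (A : Matrix n n ℂ) :
    Matrix n n ℂ :=
  NormedSpace.exp A

/-- Frobenius (Hilbert–Schmidt) norm `‖X‖₂ = (Tr (Xᴴ X))^(1/2)` -/
noncomputable def frob {n : Type*} [Fintype n] [DecidableEq n] (X : Matrix n n ℂ) : ℝ :=
  Real.sqrt (Matrix.trace (Xᴴ * X)).re

/-- trace norm `‖X‖₁ = Tr √(Xᴴ X)` -/
noncomputable def trNorm {n : Type*} [Fintype n] [DecidableEq n] (X : Matrix n n ℂ) : ℝ :=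
  (Matrix.trace (msqrt (Xᴴ * X))).re

/-- relative entropy `S(ρ‖σ) = Tr (ρ (log ρ − log σ))` -/
noncomputable def relEnt {n : Type*} [Fintype n] [DecidableEq n]
    (rho sigma : Matrix n n ℂ) : ℝ :=
  (Matrix.trace (rho * (mlog rho - mlog sigma))).re

/-- relative entropy with logarithms taken on the support -/
noncomputable def relEnt0 {n : Type*} [Fintype n] [DecidableEq n]
    (rho sigma : Matrix n n ℂ) : ℝ :=
  (Matrix.trace (rho * (mlog0 rho - mlog0 sigma))).re

/-- von Neumann entropy `S(τ) = −Tr (τ log τ)` -/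
noncomputable def vN {n : Type*} [Fintype n] [DecidableEq n] (rho : Matrix n n ℂ) : ℝ :=
  -(Matrix.trace (rho * mlog rho)).re

section Tripartite

variable {α β γ : Type*} [Fintype α] [DecidableEq α] [Fintype β] [DecidableEq β]
  [Fintype γ] [DecidableEq γ]

/-- partial trace over the `B` system: `ρ_AC` -/
noncomputable def ptrB (M : Matrix (α × β × γ) (α × β × γ) ℂ) : Matrix (α × γ) (α × γ) ℂ :=
  fun p q => ∑ b : β, M (p.1, b, p.2) (q.1, b, q.2)

/-- partial trace over the `A` system: `ρ_BC` -/
noncomputable def ptrA (M : Matrix (α × β × γ) (α × β × γ) ℂ) : Matrix (β × γ) (β × γ) ℂ :=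
  fun p q => ∑ a : α, M (a, p.1, p.2) (a, q.1, q.2)

/-- partial trace over the `A` and `B` systems: `ρ_C` -/
noncomputable def ptrAB (M : Matrix (α × β × γ) (α × β × γ) ℂ) : Matrix γ γ ℂ :=
  fun c c' => ∑ a : α, ∑ b : β, M (a, b, c) (a, b, c')

/-- embedding `X_AC ↦ X_AC ⊗ I_B` -/
def embAC (X : Matrix (α × γ) (α × γ) ℂ) : Matrix (α × β × γ) (α × β × γ) ℂ :=
  fun p q => if p.2.1 = q.2.1 then X (p.1, p.2.2) (q.1, q.2.2) else 0

/-- embedding `X_BC ↦ I_A ⊗ X_BC` -/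
def embBC (X : Matrix (β × γ) (β × γ) ℂ) : Matrix (α × β × γ) (α × β × γ) ℂ :=
  fun p q => if p.1 = q.1 then X p.2 q.2 else 0

/-- embedding `X_C ↦ I_A ⊗ I_B ⊗ X_C` -/
def embC (X : Matrix γ γ ℂ) : Matrix (α × β × γ) (α × β × γ) ℂ :=
  fun p q => if p.1 = q.1 ∧ p.2.1 = q.2.1 then X p.2.2 q.2.2 else 0

/-- conditional mutual information `I(A:B|C)_ρ = S(ρ_AC)+S(ρ_BC)−S(ρ_ABC)−S(ρ_C)` -/
noncomputable def cmi (rho : Matrix (α × β × γ) (α × β × γ) ℂ) : ℝ :=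
  vN (ptrB rho) + vN (ptrA rho) - vN rho - vN (ptrAB rho)

/-- the operator `exp(log σ_AC + log σ_BC − log σ_C)` -/
noncomputable def sigOp (sigma : Matrix (α × β × γ) (α × β × γ) ℂ) :
    Matrix (α × β × γ) (α × β × γ) ℂ :=
  mexp (embAC (mlog (ptrB sigma)) + embBC (mlog (ptrA sigma)) - embC (mlog (ptrAB sigma)))

/-- the operator `exp(log ρ_AC + log ρ_BC)` -/
noncomputable def sigOp2 (sigma : Matrix (α × β × γ) (α × β × γ) ℂ) :
    Matrix (α × β × γ) (α × β × γ) ℂ :=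
  mexp (embAC (mlog (ptrB sigma)) + embBC (mlog (ptrA sigma)))

end Tripartite

section MsqrtPort
open scoped MatrixOrder

lemma ps_msqrt_eq {n : Type*} [Fintype n] [DecidableEq n] {A : Matrix n n ℂ}
    (hA : A.PosSemidef) : msqrt A = CFC.sqrt A := by
  have h0 : 0 ≤ A := hA.nonneg
  rw [msqrt, dif_pos hA, CFC.sqrt_eq_cfc, cfc_nnreal_eq_real _ A, hA.1.cfc_eq, IsHermitian.cfc,
    Unitary.conjStarAlgAut_apply]
  congr 2
  funext i
  ext j
  rw [diagonal_apply, diagonal_apply]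
  split_ifs <;> simp [max_eq_left (hA.eigenvalues_nonneg i)]

lemma ps_msqrt_psd {n : Type*} [Fintype n] [DecidableEq n] {A : Matrix n n ℂ}
    (hA : A.PosSemidef) : (msqrt A).PosSemidef := by
  rw [ps_msqrt_eq hA]
  exact (CFC.sqrt_nonneg A).posSemidef

lemma ps_msqrt_sq {n : Type*} [Fintype n] [DecidableEq n] {A : Matrix n n ℂ}
    (hA : A.PosSemidef) : msqrt A ^ 2 = A := by
  have h0 : 0 ≤ A := hA.nonneg
  rw [ps_msqrt_eq hA, CFC.sq_sqrt A]

lemma ps_msqrt_unique {n : Type*} [Fintype n] [DecidableEq n] {A B : Matrix n n ℂ}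
    (hB : B.PosSemidef) (hA : A.PosSemidef) (h : B ^ 2 = A) : B = msqrt A := by
  rw [ps_msqrt_eq hA, eq_comm, CFC.sqrt_eq_iff A B hA.nonneg hB.nonneg, ← h, sq]

end MsqrtPort

set_option maxHeartbeats 1000000 in
lemma ps_per_index (a x t l : ℝ) (h1 : 0 ≤ a + x) (h2 : 0 ≤ a - x) (h3 : x = l * t)
    (h4 : 0 ≤ t + l) (h5 : 0 ≤ t - l) : l ^ 2 ≤ a := by
  rcases le_or_gt 0 l with hl | hl
  · have : l * l ≤ l * t := mul_le_mul_of_nonneg_left (by linarith) hl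
    nlinarith
  · have : (-l) * (-l) ≤ (-l) * t := mul_le_mul_of_nonneg_left (by linarith) (by linarith)
    nlinarith

lemma ps_psd_diag_re_nonneg {n : Type*} [Fintype n] [DecidableEq n] {A : Matrix n n ℂ}
    (hA : A.PosSemidef) (i : n) : 0 ≤ (A i i).re := by
  have h := hA.dotProduct_mulVec_nonneg (Pi.single i 1)
  have he : star (Pi.single i 1 : n → ℂ) ⬝ᵥ A *ᵥ Pi.single i 1 = A i i := by
    simp [dotProduct, mulVec, Pi.single_apply]
  rw [he] at h
  simpa using (Complex.le_def.mp h).1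

lemma ps_trace_re_eq_sum {n : Type*} [Fintype n] (A : Matrix n n ℂ) :
    (Matrix.trace A).re = ∑ i, (A i i).re := by
  simp [Matrix.trace, Matrix.diag, Complex.re_sum]

lemma ps_trace_conj_unitary {n : Type*} [Fintype n] [DecidableEq n]
    (U A : Matrix n n ℂ) (hU : U * star U = 1) :
    Matrix.trace (star U * A * U) = Matrix.trace A := by
  rw [Matrix.trace_mul_cycle, hU, one_mul]

lemma ps_diag_congr {n : Type*} [DecidableEq n] {f g : n → ℂ} (h : ∀ i, f i = g i) :
    (Matrix.diagonal f : Matrix n n ℂ) = Matrix.diagonal g := by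
  have : f = g := funext h
  rw [this]

lemma ps_key {n : Type*} [Fintype n] [DecidableEq n]
    (A B : Matrix n n ℂ) (hA : A.PosSemidef) (hB : B.PosSemidef) :
    frob (A - B) ^ 2 ≤ trNorm (A ^ 2 - B ^ 2) := by
  have hD : (A - B).IsHermitian := hA.1.sub hB.1
  have hX : (A ^ 2 - B ^ 2).IsHermitian := (hA.pow 2).1.sub (hB.pow 2).1
  set U : Matrix n n ℂ := (hD.eigenvectorUnitary : Matrix n n ℂ) with hUdef
  have hUU : U * star U = 1 := Matrix.mem_unitaryGroup_iff.mp hD.eigenvectorUnitary.2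
  have hUU' : star U * U = 1 := Matrix.mem_unitaryGroup_iff'.mp hD.eigenvectorUnitary.2
  have hdiagD : star U * (A - B) * U = diagonal (Complex.ofReal ∘ hD.eigenvalues) :=
    by have := hD.conjStarAlgAut_star_eigenvectorUnitary; rwa [Unitary.conjStarAlgAut_star_apply] at this
  have keyD : star U * (A - B) = diagonal (Complex.ofReal ∘ hD.eigenvalues) * star U := by
    calc star U * (A - B) = star U * (A - B) * (U * star U) := by rw [hUU, mul_one]
      _ = (star U * (A - B) * U) * star U := by simp only [mul_assoc]
      _ = diagonal (Complex.ofReal ∘ hD.eigenvalues) * star U := by rw [hdiagD]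
  have keyD2 : (A - B) * U = U * diagonal (Complex.ofReal ∘ hD.eigenvalues) := by
    calc (A - B) * U = (U * star U) * ((A - B) * U) := by rw [hUU, one_mul]
      _ = U * (star U * (A - B) * U) := by simp only [mul_assoc]
      _ = U * diagonal (Complex.ofReal ∘ hD.eigenvalues) := by rw [hdiagD]
  -- Frobenius side
  have hfrob : frob (A - B) ^ 2 = ∑ i, hD.eigenvalues i ^ 2 := by
    have h1 : Matrix.trace ((A - B)ᴴ * (A - B))
        = Matrix.trace (star U * ((A - B) * (A - B)) * U) := by
      rw [hD.eq]; exact (ps_trace_conj_unitary U _ hUU).symm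
    have h2 : star U * ((A - B) * (A - B)) * U
        = diagonal (Complex.ofReal ∘ hD.eigenvalues) * diagonal (Complex.ofReal ∘ hD.eigenvalues) := by
      calc star U * ((A - B) * (A - B)) * U = (star U * (A - B)) * ((A - B) * U) := by
            simp only [mul_assoc]
        _ = (diagonal (Complex.ofReal ∘ hD.eigenvalues) * star U)
            * (U * diagonal (Complex.ofReal ∘ hD.eigenvalues)) := by rw [keyD, keyD2]
        _ = diagonal (Complex.ofReal ∘ hD.eigenvalues) * (star U * U)
            * diagonal (Complex.ofReal ∘ hD.eigenvalues) := by simp only [mul_assoc]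
        _ = _ := by rw [hUU', mul_one]
    have h4 : (Matrix.trace ((A - B)ᴴ * (A - B))).re = ∑ i, hD.eigenvalues i ^ 2 := by
      rw [h1, h2, diagonal_mul_diagonal, Matrix.trace_diagonal]
      simp [Complex.re_sum, ← Complex.ofReal_mul, sq]
    have hnn : 0 ≤ (Matrix.trace ((A - B)ᴴ * (A - B))).re := by
      rw [h4]; exact Finset.sum_nonneg fun i _ => sq_nonneg _
    rw [frob, Real.sq_sqrt hnn, h4]
  rw [hfrob]
  -- the absolute value |X|
  set W : Matrix n n ℂ := (hX.eigenvectorUnitary : Matrix n n ℂ) with hWdef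
  have hWW : W * star W = 1 := Matrix.mem_unitaryGroup_iff.mp hX.eigenvectorUnitary.2
  have hWW' : star W * W = 1 := Matrix.mem_unitaryGroup_iff'.mp hX.eigenvectorUnitary.2
  have hspecX : A ^ 2 - B ^ 2 = W * diagonal (Complex.ofReal ∘ hX.eigenvalues) * star W :=
    hX.spectral_theorem
  have hconj_psd : ∀ f : n → ℝ, (∀ i, 0 ≤ f i) →
      (W * diagonal (Complex.ofReal ∘ f) * star W).PosSemidef := by
    intro f hf
    have h := PosSemidef.mul_mul_conjTranspose_same
      (posSemidef_diagonal_iff.mpr fun i => by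
        simpa only [Function.comp_apply] using Complex.zero_le_real.mpr (hf i)) W
    rwa [Matrix.star_eq_conjTranspose]
  have hAabsPSD : (W * diagonal (Complex.ofReal ∘ fun i => |hX.eigenvalues i|) * star W).PosSemidef :=
    hconj_psd _ fun i => abs_nonneg _
  have hconj_sq : ∀ f : n → ℝ, (W * diagonal (Complex.ofReal ∘ f) * star W) ^ 2
      = W * diagonal (Complex.ofReal ∘ fun i => f i * f i) * star W := by
    intro f
    rw [sq]
    calc W * diagonal (Complex.ofReal ∘ f) * star W * (W * diagonal (Complex.ofReal ∘ f) * star W)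
        = W * (diagonal (Complex.ofReal ∘ f) * (star W * W) * diagonal (Complex.ofReal ∘ f)) * star W := by
          simp only [mul_assoc]
      _ = W * diagonal (Complex.ofReal ∘ fun i => f i * f i) * star W := by
          rw [hWW', mul_one, diagonal_mul_diagonal]
          exact congrArg (fun dd => W * dd * star W) (ps_diag_congr fun i => by simp)
  have hPSDXX : ((A ^ 2 - B ^ 2)ᴴ * (A ^ 2 - B ^ 2)).PosSemidef :=
    posSemidef_conjTranspose_mul_self _
  have hXsq : (A ^ 2 - B ^ 2) ^ 2
      = W * diagonal (Complex.ofReal ∘ fun i => hX.eigenvalues i * hX.eigenvalues i) * star W := by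
    conv_lhs => rw [hspecX]
    exact hconj_sq _
  have hAabs_sq : (W * diagonal (Complex.ofReal ∘ fun i => |hX.eigenvalues i|) * star W) ^ 2
      = (A ^ 2 - B ^ 2)ᴴ * (A ^ 2 - B ^ 2) := by
    rw [hconj_sq, hX.eq, ← sq, hXsq]
    have : (Complex.ofReal ∘ fun i => |hX.eigenvalues i| * |hX.eigenvalues i|)
        = (Complex.ofReal ∘ fun i => hX.eigenvalues i * hX.eigenvalues i) := by
      funext i; simp [abs_mul_abs_self]
    rw [this]
  have hAabs_eq : (W * diagonal (Complex.ofReal ∘ fun i => |hX.eigenvalues i|) * star W)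
      = msqrt ((A ^ 2 - B ^ 2)ᴴ * (A ^ 2 - B ^ 2)) := ps_msqrt_unique hAabsPSD hPSDXX hAabs_sq
  have htr : trNorm (A ^ 2 - B ^ 2)
      = (Matrix.trace (W * diagonal (Complex.ofReal ∘ fun i => |hX.eigenvalues i|) * star W)).re := by
    rw [trNorm, hAabs_eq]
  rw [htr, ← ps_trace_conj_unitary U _ hUU, ps_trace_re_eq_sum]
  refine Finset.sum_le_sum fun i _ => ?_
  -- abbreviations
  set Aabs : Matrix n n ℂ := W * diagonal (Complex.ofReal ∘ fun i => |hX.eigenvalues i|) * star W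
    with hAabsdef
  -- conjugated PSD diag entries are nonneg
  have hq_nonneg : ∀ (Y : Matrix n n ℂ), Y.PosSemidef → 0 ≤ ((star U * Y * U) i i).re := by
    intro Y hY
    have h := hY.conjTranspose_mul_mul_same U
    rw [Matrix.star_eq_conjTranspose]
    exact ps_psd_diag_re_nonneg h i
  have hsplit : ∀ (Y Z : Matrix n n ℂ), ((star U * (Y + Z) * U) i i).re
      = ((star U * Y * U) i i).re + ((star U * Z * U) i i).re := by
    intro Y Z
    rw [mul_add, add_mul, Matrix.add_apply, Complex.add_re]
  have hsplit_sub : ∀ (Y Z : Matrix n n ℂ), ((star U * (Y - Z) * U) i i).re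
      = ((star U * Y * U) i i).re - ((star U * Z * U) i i).re := by
    intro Y Z
    rw [mul_sub, sub_mul, Matrix.sub_apply, Complex.sub_re]
  have hconj_add : ∀ f g : n → ℝ,
      (W * diagonal (Complex.ofReal ∘ f) * star W) + (W * diagonal (Complex.ofReal ∘ g) * star W)
      = W * diagonal (Complex.ofReal ∘ fun j => f j + g j) * star W := by
    intro f g
    rw [← add_mul, ← mul_add, diagonal_add]
    exact congrArg (fun dd => W * dd * star W) (ps_diag_congr fun j => by simp)
  have hconj_sub : ∀ f g : n → ℝ,
      (W * diagonal (Complex.ofReal ∘ f) * star W) - (W * diagonal (Complex.ofReal ∘ g) * star W)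
      = W * diagonal (Complex.ofReal ∘ fun j => f j - g j) * star W := by
    intro f g
    rw [← sub_mul, ← mul_sub, diagonal_sub]
    exact congrArg (fun dd => W * dd * star W) (ps_diag_congr fun j => by simp)
  -- h1 : Aabs + X psd
  have hplus_eq : Aabs + (A ^ 2 - B ^ 2)
      = W * diagonal (Complex.ofReal ∘ fun j => |hX.eigenvalues j| + hX.eigenvalues j) * star W := by
    have e := hconj_add (fun j => |hX.eigenvalues j|) hX.eigenvalues
    calc Aabs + (A ^ 2 - B ^ 2)
        = Aabs + W * diagonal (Complex.ofReal ∘ hX.eigenvalues) * star W :=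
          congrArg (Aabs + ·) hspecX
      _ = _ := by rw [hAabsdef]; exact e
  have hminus_eq : Aabs - (A ^ 2 - B ^ 2)
      = W * diagonal (Complex.ofReal ∘ fun j => |hX.eigenvalues j| - hX.eigenvalues j) * star W := by
    have e := hconj_sub (fun j => |hX.eigenvalues j|) hX.eigenvalues
    calc Aabs - (A ^ 2 - B ^ 2)
        = Aabs - W * diagonal (Complex.ofReal ∘ hX.eigenvalues) * star W :=
          congrArg (Aabs - ·) hspecX
      _ = _ := by rw [hAabsdef]; exact e
  have h1 : 0 ≤ ((star U * Aabs * U) i i).re + ((star U * (A ^ 2 - B ^ 2) * U) i i).re := by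
    rw [← hsplit]
    refine hq_nonneg _ ?_
    rw [hplus_eq]
    exact hconj_psd _ fun j => by
      have := neg_abs_le (hX.eigenvalues j); linarith
  have h2 : 0 ≤ ((star U * Aabs * U) i i).re - ((star U * (A ^ 2 - B ^ 2) * U) i i).re := by
    rw [← hsplit_sub]
    refine hq_nonneg _ ?_
    rw [hminus_eq]
    exact hconj_psd _ fun j => by
      have := le_abs_self (hX.eigenvalues j); linarith
  -- h3 : the X entry equals lam i * T entry
  have h2X : (A - B) * (A + B) + (A + B) * (A - B) = (A ^ 2 - B ^ 2) + (A ^ 2 - B ^ 2) := by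
    noncomm_ring
  have hXmul : ((star U * (A ^ 2 - B ^ 2) * U) i i)
      = Complex.ofReal (hD.eigenvalues i) * ((star U * (A + B) * U) i i) := by
    have e1 : star U * ((A - B) * (A + B)) * U
        = diagonal (Complex.ofReal ∘ hD.eigenvalues) * (star U * (A + B) * U) := by
      calc star U * ((A - B) * (A + B)) * U = (star U * (A - B)) * ((A + B) * U) := by
            simp only [mul_assoc]
        _ = diagonal (Complex.ofReal ∘ hD.eigenvalues) * star U * ((A + B) * U) := by rw [keyD]
        _ = diagonal (Complex.ofReal ∘ hD.eigenvalues) * (star U * (A + B) * U) := by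
            simp only [mul_assoc]
    have e2 : star U * ((A + B) * (A - B)) * U
        = (star U * (A + B) * U) * diagonal (Complex.ofReal ∘ hD.eigenvalues) := by
      calc star U * ((A + B) * (A - B)) * U = (star U * (A + B)) * ((A - B) * U) := by
            simp only [mul_assoc]
        _ = (star U * (A + B)) * (U * diagonal (Complex.ofReal ∘ hD.eigenvalues)) := by rw [keyD2]
        _ = (star U * (A + B) * U) * diagonal (Complex.ofReal ∘ hD.eigenvalues) := by
            simp only [mul_assoc]
    have e3 : ((star U * ((A ^ 2 - B ^ 2) + (A ^ 2 - B ^ 2)) * U) i i)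
        = Complex.ofReal (hD.eigenvalues i) * ((star U * (A + B) * U) i i)
          + ((star U * (A + B) * U) i i) * Complex.ofReal (hD.eigenvalues i) := by
      rw [← h2X, mul_add, add_mul, Matrix.add_apply, e1, e2,
        Matrix.diagonal_mul, Matrix.mul_diagonal]
      rfl
    have e4 : ((star U * ((A ^ 2 - B ^ 2) + (A ^ 2 - B ^ 2)) * U) i i)
        = ((star U * (A ^ 2 - B ^ 2) * U) i i) + ((star U * (A ^ 2 - B ^ 2) * U) i i) := by
      rw [mul_add, add_mul, Matrix.add_apply]
    rw [e4] at e3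
    have : (2 : ℂ) * ((star U * (A ^ 2 - B ^ 2) * U) i i)
        = 2 * (Complex.ofReal (hD.eigenvalues i) * ((star U * (A + B) * U) i i)) := by
      rw [two_mul, two_mul, e3]; ring
    exact mul_left_cancel₀ two_ne_zero this
  have h3 : ((star U * (A ^ 2 - B ^ 2) * U) i i).re
      = hD.eigenvalues i * ((star U * (A + B) * U) i i).re := by
    rw [hXmul, Complex.mul_re, Complex.ofReal_re, Complex.ofReal_im]
    ring
  -- h4, h5 : T ± D psd entries
  have hDentry : ((star U * (A - B) * U) i i).re = hD.eigenvalues i := by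
    rw [hdiagD, Matrix.diagonal_apply_eq]
    simp
  have h4 : 0 ≤ ((star U * (A + B) * U) i i).re + hD.eigenvalues i := by
    rw [← hDentry, ← hsplit]
    refine hq_nonneg _ ?_
    have : (A + B) + (A - B) = A + A := by abel
    rw [this]
    exact hA.add hA
  have h5 : 0 ≤ ((star U * (A + B) * U) i i).re - hD.eigenvalues i := by
    rw [← hDentry, ← hsplit_sub]
    refine hq_nonneg _ ?_
    have : (A + B) - (A - B) = B + B := by abel
    rw [this]
    exact hB.add hB
  exact ps_per_index _ _ _ _ h1 h2 h3 h4 h5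

theorem powers_stormer {n : Type*} [Fintype n] [DecidableEq n]
    (M N : Matrix n n ℂ) (hM : M.PosSemidef) (hN : N.PosSemidef) :
    frob (msqrt M - msqrt N) ^ 2 ≤ trNorm (M - N) := by
  have h := ps_key (msqrt M) (msqrt N) (ps_msqrt_psd hM) (ps_msqrt_psd hN)
  rw [ps_msqrt_sq hM, ps_msqrt_sq hN] at h
  exact h
end

section
/- For a positive definite tripartite state ρ_ABC, S(ρ_AC) + S(ρ_BC) − S(ρ_ABC) ≥ −2 log Tr(√ρ_ABC √(exp(log ρ_AC + log ρ_BC))). -/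
open Matrix
open ComplexOrder
open scoped Classical

section Aux

variable {n : Type*} [Fintype n] [DecidableEq n]

attribute [local instance] Matrix.linftyOpNormedRing Matrix.linftyOpNormedAlgebra

lemma contOn (f : ℝ → ℝ) (A : Matrix n n ℂ) : ContinuousOn f (spectrum ℝ A) :=
  Matrix.finite_real_spectrum.continuousOn f

lemma mlog_eq {A : Matrix n n ℂ} (hA : A.IsHermitian) : mlog A = cfc Real.log A := by
  rw [mlog, dif_pos hA, hA.cfc_eq]

lemma mlog_isHermitian {A : Matrix n n ℂ} (hA : A.IsHermitian) : (mlog A).IsHermitian := by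
  rw [mlog_eq hA]
  exact (cfc_predicate Real.log A : IsSelfAdjoint _)

lemma msqrt_eq {A : Matrix n n ℂ} (hA : A.PosSemidef) : msqrt A = hA.1.cfc Real.sqrt := by
  rw [msqrt, dif_pos hA]; rfl

lemma mexp_eq_cfc {A : Matrix n n ℂ} (hA : A.IsHermitian) : mexp A = cfc Real.exp A := by
  open scoped Matrix.Norms.L2Operator in
  rw [mexp, CFC.real_exp_eq_normedSpace_exp hA]

lemma mlog_mexp {A : Matrix n n ℂ} (hA : A.IsHermitian) : mlog (mexp A) = A := by
  have h1 : mexp A = NormedSpace.exp A := by rw [mexp]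
  have h2 : (mexp A).IsHermitian := by
    rw [mexp_eq_cfc hA]; exact cfc_predicate Real.exp A
  rw [mlog_eq h2, h1]
  open scoped Matrix.Norms.L2Operator in
  exact CFC.log_exp A hA

lemma trace_mul_sum' (M N : Matrix n n ℂ) :
    Matrix.trace (M * N) = ∑ i, ∑ j, M i j * N j i := by
  simp [Matrix.trace, Matrix.mul_apply, Matrix.diag]

lemma unitary_coe_mul_star_self {A : Matrix n n ℂ} (hA : A.IsHermitian) :
    (hA.eigenvectorUnitary : Matrix n n ℂ) * star (hA.eigenvectorUnitary : Matrix n n ℂ) = 1 :=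
  Unitary.mul_star_self_of_mem (SetLike.coe_mem _)

lemma unitary_coe_star_mul_self {A : Matrix n n ℂ} (hA : A.IsHermitian) :
    star (hA.eigenvectorUnitary : Matrix n n ℂ) * (hA.eigenvectorUnitary : Matrix n n ℂ) = 1 :=
  Unitary.star_mul_self_of_mem (SetLike.coe_mem _)

lemma trace_cfc' {A : Matrix n n ℂ} (hA : A.IsHermitian) (f : ℝ → ℝ) :
    Matrix.trace (hA.cfc f) = ↑(∑ i, f (hA.eigenvalues i)) := by
  rw [Matrix.IsHermitian.cfc, Unitary.conjStarAlgAut_apply, Matrix.trace_mul_cycle,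
    unitary_coe_star_mul_self hA, Matrix.one_mul, Matrix.trace_diagonal]
  push_cast
  rfl

lemma trace_cfc_mul_cfc {A B : Matrix n n ℂ} (hA : A.IsHermitian) (hB : B.IsHermitian)
    (f g : ℝ → ℝ) :
    Matrix.trace (hA.cfc f * hB.cfc g) =
      ↑(∑ i, ∑ j, f (hA.eigenvalues i) * g (hB.eigenvalues j) *
        Complex.normSq ((star (hA.eigenvectorUnitary : Matrix n n ℂ) *
          (hB.eigenvectorUnitary : Matrix n n ℂ)) i j)) := by
  set U := (hA.eigenvectorUnitary : Matrix n n ℂ) with hU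
  set V := (hB.eigenvectorUnitary : Matrix n n ℂ) with hV
  set W := star U * V with hW
  set d : n → ℂ := fun i => ((f (hA.eigenvalues i) : ℝ) : ℂ) with hd
  set e : n → ℂ := fun j => ((g (hB.eigenvalues j) : ℝ) : ℂ) with he
  have h1 : hA.cfc f * hB.cfc g = U * (diagonal d * W * (diagonal e * star W)) * star U := by
    rw [Matrix.IsHermitian.cfc, Matrix.IsHermitian.cfc]
    simp only [Unitary.conjStarAlgAut_apply, hW, Matrix.star_mul, star_star, ← hU, ← hV]
    have h2 : U * star U = 1 := unitary_coe_mul_star_self hA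
    simp only [Matrix.mul_assoc, h2, Matrix.mul_one]
    rfl
  rw [h1, Matrix.trace_mul_cycle, ← Matrix.mul_assoc, unitary_coe_star_mul_self hA,
    Matrix.one_mul, trace_mul_sum']
  push_cast
  refine Finset.sum_congr rfl fun i _ => Finset.sum_congr rfl fun j _ => ?_
  rw [Matrix.diagonal_mul, Matrix.diagonal_mul, Matrix.star_apply]
  rw [show d i * W i j * (e j * star (W i j)) = d i * e j * (W i j * star (W i j)) by ring]
  rw [Complex.star_def, Complex.mul_conj]

lemma trace_cfc_mul_cfc_self {A : Matrix n n ℂ} (hA : A.IsHermitian) (f g : ℝ → ℝ) :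
    Matrix.trace (hA.cfc f * hA.cfc g) =
      ↑(∑ i, f (hA.eigenvalues i) * g (hA.eigenvalues i)) := by
  rw [← hA.cfc_eq, ← hA.cfc_eq, ← cfc_mul f g A (contOn f A) (contOn g A),
    hA.cfc_eq, trace_cfc' hA]

lemma cfc_posSemidef' {A : Matrix n n ℂ} (hA : A.IsHermitian) (f : ℝ → ℝ)
    (hf : ∀ x, 0 ≤ f x) : (hA.cfc f).PosSemidef := by
  rw [Matrix.IsHermitian.cfc, Unitary.conjStarAlgAut_apply]
  have hd : Matrix.PosSemidef (diagonal (RCLike.ofReal ∘ f ∘ hA.eigenvalues) : Matrix n n ℂ) :=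
    Matrix.posSemidef_diagonal_iff.mpr fun i => by
      show (0 : ℂ) ≤ ((f (hA.eigenvalues i) : ℝ) : ℂ)
      exact Complex.zero_le_real.mpr (hf _)
  have := hd.mul_mul_conjTranspose_same (hA.eigenvectorUnitary : Matrix n n ℂ)
  rwa [Matrix.star_eq_conjTranspose]

/-- Klein-type inequality: the relative entropy bounds `-2 log Tr(√ρ√σ)`. -/
lemma klein_sqrt (rho sigma : Matrix n n ℂ) (hrho : rho.PosDef) (hrho1 : rho.trace = 1)
    (hsig : sigma.PosSemidef) (hq0 : ∀ j, 0 < hsig.1.eigenvalues j) :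
    (Matrix.trace (rho * mlog rho)).re - (Matrix.trace (rho * mlog sigma)).re
      ≥ -2 * Real.log (Matrix.trace (msqrt rho * msqrt sigma)).re := by
  have hρH : rho.IsHermitian := hrho.1
  have hσH : sigma.IsHermitian := hsig.1
  have hp : ∀ i, 0 < hρH.eigenvalues i := fun i => hrho.eigenvalues_pos i
  have hq : ∀ j, 0 < hσH.eigenvalues j := hq0
  set p : n → ℝ := fun i => hρH.eigenvalues i with hpdef
  set q : n → ℝ := fun j => hσH.eigenvalues j with hqdef
  set c : n → n → ℝ := fun i j => Complex.normSq
    ((star (hρH.eigenvectorUnitary : Matrix n n ℂ) *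
      (hσH.eigenvectorUnitary : Matrix n n ℂ)) i j) with hcdef
  have hcnn : ∀ i j, 0 ≤ c i j := fun i j => Complex.normSq_nonneg _
  have hrho_eq : hρH.cfc id = rho := by
    rw [← hρH.cfc_eq]; exact cfc_id ℝ rho hρH
  -- row sums of c are 1
  have hrow : ∀ i, ∑ j, c i j = 1 := by
    intro i
    set U := (hρH.eigenvectorUnitary : Matrix n n ℂ) with hU
    set V := (hσH.eigenvectorUnitary : Matrix n n ℂ) with hV
    have hWW : (star U * V) * star (star U * V) = 1 := by
      rw [Matrix.star_mul, star_star]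
      have h2 : V * (star V * U) = U := by
        rw [← Matrix.mul_assoc, unitary_coe_mul_star_self hσH, Matrix.one_mul]
      rw [Matrix.mul_assoc, h2, unitary_coe_star_mul_self hρH]
    have h2 : ((star U * V) * star (star U * V)) i i = (1 : Matrix n n ℂ) i i := by rw [hWW]
    rw [Matrix.mul_apply, Matrix.one_apply_eq] at h2
    have h3 : ((∑ j, c i j : ℝ) : ℂ) = 1 := by
      push_cast
      rw [← h2]
      refine Finset.sum_congr rfl fun j _ => ?_
      rw [Matrix.star_apply, Complex.star_def, Complex.mul_conj]
    exact_mod_cast h3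
  -- trace of rho is the sum of eigenvalues
  have htr : ∑ i, p i = 1 := by
    have h1 : Matrix.trace (hρH.cfc id) = ((∑ i, id (p i) : ℝ) : ℂ) := trace_cfc' hρH id
    rw [hrho_eq, hrho1] at h1
    simpa using (Complex.ofReal_eq_one.mp h1.symm)
  -- trace identities
  have h1 : Matrix.trace (rho * mlog rho) = ↑(∑ i, p i * Real.log (p i)) := by
    rw [mlog, dif_pos hρH,
      show rho * hρH.cfc Real.log = hρH.cfc id * hρH.cfc Real.log by rw [hrho_eq],
      trace_cfc_mul_cfc_self hρH id Real.log]
    try simp [hpdef]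
  have h2 : Matrix.trace (rho * mlog sigma)
      = ↑(∑ i, ∑ j, p i * Real.log (q j) * c i j) := by
    rw [mlog, dif_pos hσH,
      show rho * hσH.cfc Real.log = hρH.cfc id * hσH.cfc Real.log by rw [hrho_eq],
      trace_cfc_mul_cfc hρH hσH id Real.log]
    try simp [hpdef, hqdef, hcdef]
  have h3 : Matrix.trace (msqrt rho * msqrt sigma)
      = ↑(∑ i, ∑ j, Real.sqrt (p i) * Real.sqrt (q j) * c i j) := by
    rw [msqrt_eq hrho.posSemidef, msqrt_eq hsig,
      trace_cfc_mul_cfc hρH hσH Real.sqrt Real.sqrt]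
    try simp [hpdef, hqdef, hcdef]
  rw [h1, h2, h3, Complex.ofReal_re, Complex.ofReal_re, Complex.ofReal_re]
  -- Jensen's inequality
  set w : n × n → ℝ := fun ij => p ij.1 * c ij.1 ij.2 with hwdef
  set x : n × n → ℝ := fun ij => Real.sqrt (q ij.2) / Real.sqrt (p ij.1) with hxdef
  have h₀ : ∀ ij ∈ Finset.univ (α := n × n), 0 ≤ w ij :=
    fun ij _ => mul_nonneg (hp _).le (hcnn _ _)
  have h₁ : ∑ ij : n × n, w ij = 1 := by
    rw [Fintype.sum_prod_type]
    calc ∑ i, ∑ j, p i * c i j = ∑ i, p i * ∑ j, c i j := by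
          simp [Finset.mul_sum]
      _ = ∑ i, p i := by simp [hrow]
      _ = 1 := htr
  have hmem : ∀ ij ∈ Finset.univ (α := n × n), x ij ∈ Set.Ioi (0 : ℝ) :=
    fun ij _ => div_pos (Real.sqrt_pos.mpr (hq _)) (Real.sqrt_pos.mpr (hp _))
  have jensen := (strictConcaveOn_log_Ioi.concaveOn).le_map_sum h₀ h₁ hmem
  simp only [smul_eq_mul] at jensen
  have hx_sum : ∑ ij : n × n, w ij * x ij
      = ∑ i, ∑ j, Real.sqrt (p i) * Real.sqrt (q j) * c i j := by
    rw [Fintype.sum_prod_type]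
    refine Finset.sum_congr rfl fun i _ => Finset.sum_congr rfl fun j _ => ?_
    show p i * c i j * (Real.sqrt (q j) / Real.sqrt (p i)) = _
    rw [show p i * c i j * (Real.sqrt (q j) / Real.sqrt (p i))
        = c i j * Real.sqrt (q j) * (p i / Real.sqrt (p i)) by ring, Real.div_sqrt]
    ring
  have hlog_sum : ∑ ij : n × n, w ij * Real.log (x ij)
      = (1/2) * (∑ i, ∑ j, p i * Real.log (q j) * c i j)
        - (1/2) * (∑ i, p i * Real.log (p i)) := by
    rw [Fintype.sum_prod_type]
    have hterm : ∀ i j, w (i, j) * Real.log (x (i, j))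
        = (1/2) * (p i * Real.log (q j) * c i j)
          - (1/2) * (p i * Real.log (p i)) * c i j := by
      intro i j
      show p i * c i j * Real.log (Real.sqrt (q j) / Real.sqrt (p i)) = _
      rw [Real.log_div (Real.sqrt_ne_zero'.mpr (hq j)) (Real.sqrt_ne_zero'.mpr (hp i)),
        Real.log_sqrt (hq j).le, Real.log_sqrt (hp i).le]
      ring
    calc ∑ i, ∑ j, w (i, j) * Real.log (x (i, j))
        = ∑ i, ∑ j, ((1/2) * (p i * Real.log (q j) * c i j)
            - (1/2) * (p i * Real.log (p i)) * c i j) := by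
          exact Finset.sum_congr rfl fun i _ => Finset.sum_congr rfl fun j _ => hterm i j
      _ = ∑ i, ((1/2) * (∑ j, p i * Real.log (q j) * c i j)
            - (1/2) * (p i * Real.log (p i)) * (∑ j, c i j)) := by
          refine Finset.sum_congr rfl fun i _ => ?_
          rw [Finset.sum_sub_distrib, Finset.mul_sum, Finset.mul_sum]
      _ = ∑ i, ((1/2) * (∑ j, p i * Real.log (q j) * c i j)
            - (1/2) * (p i * Real.log (p i))) := by
          refine Finset.sum_congr rfl fun i _ => ?_
          rw [hrow i, mul_one]
      _ = _ := by
          rw [Finset.sum_sub_distrib, ← Finset.mul_sum, ← Finset.mul_sum]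
  rw [hx_sum] at jensen
  rw [hlog_sum] at jensen
  linarith [jensen]

end Aux

section TriAux

variable {α β γ : Type*} [Fintype α] [DecidableEq α] [Fintype β] [DecidableEq β]
  [Fintype γ] [DecidableEq γ]

lemma trace_mul_embAC (M : Matrix (α × β × γ) (α × β × γ) ℂ) (X : Matrix (α × γ) (α × γ) ℂ) :
    Matrix.trace (M * embAC X) = Matrix.trace (ptrB M * X) := by
  rw [trace_mul_sum', trace_mul_sum']
  simp only [Fintype.sum_prod_type, embAC, ptrB, mul_ite, mul_zero, Finset.sum_mul]
  trans (∑ a : α, ∑ b : β, ∑ c : γ, ∑ a' : α, ∑ c' : γ,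
      M (a, b, c) (a', b, c') * X (a', c') (a, c))
  · refine Finset.sum_congr rfl fun a _ => Finset.sum_congr rfl fun b _ =>
      Finset.sum_congr rfl fun c _ => Finset.sum_congr rfl fun a' _ => ?_
    rw [Finset.sum_comm]
    exact Finset.sum_congr rfl fun c' _ => Fintype.sum_ite_eq' b _
  · refine Finset.sum_congr rfl fun a _ => ?_
    rw [Finset.sum_comm]
    refine Finset.sum_congr rfl fun c _ => ?_
    rw [Finset.sum_comm]
    refine Finset.sum_congr rfl fun a' _ => ?_
    rw [Finset.sum_comm]

lemma trace_mul_embBC (M : Matrix (α × β × γ) (α × β × γ) ℂ) (X : Matrix (β × γ) (β × γ) ℂ) :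
    Matrix.trace (M * embBC X) = Matrix.trace (ptrA M * X) := by
  rw [trace_mul_sum', trace_mul_sum']
  simp only [Fintype.sum_prod_type, embBC, ptrA, mul_ite, mul_zero, Finset.sum_mul]
  trans (∑ a : α, ∑ b : β, ∑ c : γ, ∑ b' : β, ∑ c' : γ,
      M (a, b, c) (a, b', c') * X (b', c') (b, c))
  · refine Finset.sum_congr rfl fun a _ => Finset.sum_congr rfl fun b _ =>
      Finset.sum_congr rfl fun c _ => ?_
    rw [Finset.sum_comm]
    refine Finset.sum_congr rfl fun b' _ => ?_
    rw [Finset.sum_comm]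
    exact Finset.sum_congr rfl fun c' _ => Fintype.sum_ite_eq' a _
  · rw [Finset.sum_comm]
    refine Finset.sum_congr rfl fun b _ => ?_
    rw [Finset.sum_comm]
    refine Finset.sum_congr rfl fun c _ => ?_
    rw [Finset.sum_comm]
    refine Finset.sum_congr rfl fun b' _ => ?_
    rw [Finset.sum_comm]

lemma embAC_isHermitian {X : Matrix (α × γ) (α × γ) ℂ} (hX : X.IsHermitian) :
    (embAC (β := β) X).IsHermitian := by
  ext p q
  simp only [Matrix.conjTranspose_apply, embAC]
  by_cases h : q.2.1 = p.2.1
  · rw [if_pos h, if_pos h.symm, ← Matrix.conjTranspose_apply, hX.eq]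
  · rw [if_neg h, if_neg (fun hh => h hh.symm), star_zero]

lemma embBC_isHermitian {X : Matrix (β × γ) (β × γ) ℂ} (hX : X.IsHermitian) :
    (embBC (α := α) X).IsHermitian := by
  ext p q
  simp only [Matrix.conjTranspose_apply, embBC]
  by_cases h : q.1 = p.1
  · rw [if_pos h, if_pos h.symm, ← Matrix.conjTranspose_apply, hX.eq]
  · rw [if_neg h, if_neg (fun hh => h hh.symm), star_zero]

end TriAux

theorem subadditivity_lower_bound {α β γ : Type*} [Fintype α] [DecidableEq α] [Fintype β] [DecidableEq β]
    [Fintype γ] [DecidableEq γ]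
    (rho : Matrix (α × β × γ) (α × β × γ) ℂ)
    (hrho : rho.PosDef) (hrho1 : rho.trace = 1)
    (hAC : (ptrB rho).PosDef) (hBC : (ptrA rho).PosDef) (hC : (ptrAB rho).PosDef) :
    vN (ptrB rho) + vN (ptrA rho) - vN rho ≥
      -2 * Real.log (Matrix.trace (msqrt rho * msqrt (sigOp2 rho))).re := by
  have hρH : rho.IsHermitian := hrho.1
  have hLACh : (mlog (ptrB rho)).IsHermitian := mlog_isHermitian hAC.1
  have hLBCh : (mlog (ptrA rho)).IsHermitian := mlog_isHermitian hBC.1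
  set H := embAC (β := β) (mlog (ptrB rho)) + embBC (mlog (ptrA rho)) with hHdef
  have hH : H.IsHermitian := Matrix.IsHermitian.add (embAC_isHermitian hLACh)
    (embBC_isHermitian hLBCh)
  have hσdef : sigOp2 rho = mexp H := rfl
  have hσ_cfc : sigOp2 rho = cfc Real.exp H := by
    rw [hσdef]
    exact mexp_eq_cfc hH
  have hσPSD : (sigOp2 rho).PosSemidef := by
    rw [hσ_cfc, hH.cfc_eq]
    exact cfc_posSemidef' hH Real.exp fun x => (Real.exp_pos x).le
  have hmlogσ : mlog (sigOp2 rho) = H := by rw [hσdef]; exact mlog_mexp hH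
  -- eigenvalues of sigma are positive
  have hq0 : ∀ j, 0 < hσPSD.1.eigenvalues j := by
    intro j
    have hmem := hσPSD.1.eigenvalues_mem_spectrum_real j
    have hspec : spectrum ℝ (sigOp2 rho) = Real.exp '' spectrum ℝ H := by
      conv_lhs => rw [hσ_cfc]
      exact cfc_map_spectrum Real.exp H hH (contOn _ _)
    rw [hspec] at hmem
    obtain ⟨y, -, hy⟩ := hmem
    exact hy ▸ Real.exp_pos y
  -- the entropy identity
  have hLHS : vN (ptrB rho) + vN (ptrA rho) - vN rho
      = (Matrix.trace (rho * mlog rho)).re - (Matrix.trace (rho * mlog (sigOp2 rho))).re := by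
    rw [hmlogσ]
    have e1 : vN (ptrB rho) = -(Matrix.trace (rho * embAC (β := β) (mlog (ptrB rho)))).re := by
      rw [vN, trace_mul_embAC rho (mlog (ptrB rho))]
    have e2 : vN (ptrA rho) = -(Matrix.trace (rho * embBC (α := α) (mlog (ptrA rho)))).re := by
      rw [vN, trace_mul_embBC rho (mlog (ptrA rho))]
    rw [e1, e2, vN, hHdef, mul_add, Matrix.trace_add, Complex.add_re]
    ring
  rw [hLHS, ge_iff_le]
  exact klein_sqrt rho (sigOp2 rho) hrho hrho1 hσPSD hq0
end
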